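/- In the exploration process of the DC-PPM, suppose the vertex u currently being explored has type x, and let D be the number of neighbours u has in the unexplored set U(m). Then, conditionally on D = d, the types of these d neighbours are i.i.d. with law μ*^(m)_x given by dμ*^(m)_x(y) = κ(x,y)·dμ^(m)(y) / ∫_S κ(x,z) dμ^(m)(z). Moreover, with N_m as in the reservoir lemma, for all n ≥ N_m the total variation distance between μ*^(m)_x and μ*_x satisfies ||μ*^(m)_x - μ*_x||_TV ≤ 4·(κ_max³/κ_min²)·(m/n). -/

import Mathlib

noncomputable section

/-- The kernel `κ(x,y) = |xy|·(a·1{xy>0} + b·1{xy<0})` on the type space `S = (-W) ∪ W`. -/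
def kfun (a b : ℝ) (x y : ℝ) : ℝ := |x * y| * (if 0 < x * y then a else b)

/-- `κ_max`, the maximum of `κ` on `S × S` when `W ⊆ [φmin, φmax]`. -/
def kfunMax (a b φmax : ℝ) : ℝ := max a b * φmax ^ 2

/-- `κ_min`, the minimum of `κ` on `S × S` when `W ⊆ [φmin, φmax]`. -/
def kfunMin (a b φmin : ℝ) : ℝ := min a b * φmin ^ 2

/-- The law `μ` of a type `x = σφ`: `μ(A) = ∫_A (1/2) dν(|x|)`. -/
def typeLaw (ν : MeasureTheory.Measure ℝ) : MeasureTheory.Measure ℝ :=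
  (2 : ENNReal)⁻¹ • (ν.map (fun x => -x) + ν)

/-- Normalization of a finite nonzero measure to a probability measure. -/
def mnormalize (μ : MeasureTheory.Measure ℝ) : MeasureTheory.Measure ℝ :=
  (μ Set.univ)⁻¹ • μ

/-- The law `μ^{(m)} = μ^{(m)}_{x_1,…,x_m}` of the types of unexplored vertices after the
vertices of types `x_1, …, x_m` have been explored:
`dμ^{(m)}(y) ∝ ∏_{i=1}^m (1 - κ(x_i,y)/n) · dμ(y)`. -/
def muExplored (a b : ℝ) (ν : MeasureTheory.Measure ℝ) (n m : ℕ) (x : Fin m → ℝ) :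
    MeasureTheory.Measure ℝ :=
  mnormalize ((typeLaw ν).withDensity fun y =>
    ENNReal.ofReal (∏ i : Fin m, (1 - kfun a b (x i) y / n)))

/-- The size-biased kernel law `dμ*_x(y) ∝ κ(x,y)·dμ(y)` associated to a base law `μ`. -/
def kernelBiased (a b : ℝ) (μ : MeasureTheory.Measure ℝ) (x : ℝ) : MeasureTheory.Measure ℝ :=
  mnormalize (μ.withDensity fun y => ENNReal.ofReal (kfun a b x y))

/-- `λ_x(S) = ∫_S κ(x,y) dμ(y)`. -/
def lamTotal (a b : ℝ) (ν : MeasureTheory.Measure ℝ) (x : ℝ) : ℝ :=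
  ∫ y, kfun a b x y ∂(typeLaw ν)

open MeasureTheory ProbabilityTheory Filter Topology

section Aux

variable {a b φmin φmax : ℝ}

lemma kfun_nonneg (ha : 0 < a) (hb : 0 < b) (x y : ℝ) : 0 ≤ kfun a b x y := by
  unfold kfun
  have : (0:ℝ) ≤ if 0 < x * y then a else b := by split <;> linarith
  positivity

lemma kfun_le (ha : 0 < a) (hb : 0 < b) (hφmin : 0 < φmin) {x y : ℝ}
    (hx : |x| ∈ Set.Icc φmin φmax) (hy : |y| ∈ Set.Icc φmin φmax) :
    kfun a b x y ≤ kfunMax a b φmax := by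
  obtain ⟨hx1, hx2⟩ := hx; obtain ⟨hy1, hy2⟩ := hy
  have h1 : |x * y| = |x| * |y| := abs_mul x y
  have h2 : (if 0 < x * y then a else b) ≤ max a b := by
    split; exacts [le_max_left _ _, le_max_right _ _]
  have h3 : (0:ℝ) < if 0 < x * y then a else b := by split <;> linarith
  have hax : (0:ℝ) ≤ |x| := abs_nonneg x
  have hay : (0:ℝ) ≤ |y| := abs_nonneg y
  unfold kfun kfunMax
  rw [h1]
  have hφ0 : (0:ℝ) ≤ φmax := le_trans (le_trans hφmin.le hx1) hx2
  have hA : |x| * |y| ≤ φmax * φmax := mul_le_mul hx2 hy2 hay hφ0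
  have hB : (0:ℝ) ≤ φmax * φmax := mul_nonneg hφ0 hφ0
  nlinarith [mul_le_mul hA h2 h3.le hB]

lemma le_kfun (ha : 0 < a) (hb : 0 < b) (hφmin : 0 < φmin) {x y : ℝ}
    (hx : |x| ∈ Set.Icc φmin φmax) (hy : |y| ∈ Set.Icc φmin φmax) :
    kfunMin a b φmin ≤ kfun a b x y := by
  obtain ⟨hx1, hx2⟩ := hx; obtain ⟨hy1, hy2⟩ := hy
  have h1 : |x * y| = |x| * |y| := abs_mul x y
  have h2 : min a b ≤ if 0 < x * y then a else b := by
    split; exacts [min_le_left _ _, min_le_right _ _]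
  have hmb : (0:ℝ) < min a b := lt_min ha hb
  have h3 : (0:ℝ) ≤ if 0 < x * y then a else b := by split <;> linarith
  unfold kfun kfunMin
  rw [h1]
  have hA : φmin * φmin ≤ |x| * |y| := mul_le_mul hx1 hy1 hφmin.le (abs_nonneg x)
  have hB : (0:ℝ) ≤ φmin * φmin := mul_nonneg hφmin.le hφmin.le
  nlinarith [mul_le_mul h2 hA hB h3]

lemma kfunMax_pos (ha : 0 < a) (hb : 0 < b) (hφmin : 0 < φmin) (hφ : φmin ≤ φmax) :
    0 < kfunMax a b φmax := by
  have : (0:ℝ) < φmax := lt_of_lt_of_le hφmin hφ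
  have : (0:ℝ) < max a b := lt_max_of_lt_left ha
  unfold kfunMax; positivity

lemma kfunMin_pos (ha : 0 < a) (hb : 0 < b) (hφmin : 0 < φmin) :
    0 < kfunMin a b φmin := by
  have : (0:ℝ) < min a b := lt_min ha hb
  unfold kfunMin; positivity

lemma kfun_measurable (a b x : ℝ) : Measurable (kfun a b x) := by
  unfold kfun
  have h1 : Measurable fun y => |x * y| := (measurable_const.mul measurable_id).abs
  have h2 : Measurable fun y : ℝ => if 0 < x * y then a else b := by
    apply Measurable.ite _ measurable_const measurable_const
    exact measurableSet_lt measurable_const (measurable_const.mul measurable_id)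
  exact h1.mul h2

lemma typeLaw_isProb (ν : Measure ℝ) [IsProbabilityMeasure ν] :
    IsProbabilityMeasure (typeLaw ν) := by
  constructor
  unfold typeLaw
  simp only [Measure.smul_apply, Measure.add_apply, smul_eq_mul]
  rw [Measure.map_apply measurable_neg MeasurableSet.univ]
  simp [measure_univ]
  have h2 : (1 + 1 : ENNReal) = 2 := by norm_num
  rw [h2, ENNReal.inv_mul_cancel] <;> norm_num

lemma typeLaw_ae_supp (ν : Measure ℝ) (hφmin : 0 < φmin)
    (hsupp : ∀ᵐ x ∂ν, x ∈ Set.Icc φmin φmax) :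
    ∀ᵐ y ∂(typeLaw ν), |y| ∈ Set.Icc φmin φmax := by
  have hν' : ∀ᵐ x ∂ν, |x| ∈ Set.Icc φmin φmax := by
    filter_upwards [hsupp] with x hx
    obtain ⟨h1, h2⟩ := hx
    rw [abs_of_pos (lt_of_lt_of_le hφmin h1)]; exact ⟨h1, h2⟩
  rw [ae_iff] at hν' ⊢
  unfold typeLaw
  simp only [Measure.smul_apply, Measure.add_apply, smul_eq_mul]
  have hmeas : MeasurableSet {y : ℝ | ¬ |y| ∈ Set.Icc φmin φmax} := by
    apply MeasurableSet.compl
    exact measurable_abs measurableSet_Icc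
  rw [Measure.map_apply measurable_neg hmeas]
  have : (fun x : ℝ => -x) ⁻¹' {y : ℝ | ¬ |y| ∈ Set.Icc φmin φmax}
      = {y : ℝ | ¬ |y| ∈ Set.Icc φmin φmax} := by
    ext y; simp [abs_neg]
  rw [this, hν']
  simp

end Aux

section Aux2

open ENNReal

lemma weier {ι : Type*} (s : Finset ι) (t : ι → ℝ) (h0 : ∀ i ∈ s, 0 ≤ t i)
    (h1 : ∀ i ∈ s, t i ≤ 1) : 1 - ∑ i ∈ s, t i ≤ ∏ i ∈ s, (1 - t i) := by
  classical
  induction s using Finset.induction_on with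
  | empty => simp
  | insert a s hnot ih =>
    rw [Finset.sum_insert hnot, Finset.prod_insert hnot]
    have h0a := h0 a (Finset.mem_insert_self a s)
    have h1a := h1 a (Finset.mem_insert_self a s)
    have ih' := ih (fun i hi => h0 i (Finset.mem_insert_of_mem hi))
      (fun i hi => h1 i (Finset.mem_insert_of_mem hi))
    have hsum : 0 ≤ ∑ i ∈ s, t i := Finset.sum_nonneg fun i hi => h0 i (Finset.mem_insert_of_mem hi)
    nlinarith

lemma mnormalize_apply (μ : MeasureTheory.Measure ℝ) (A : Set ℝ) :
    mnormalize μ A = (μ Set.univ)⁻¹ * μ A := rfl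

lemma mnormalize_isProb {μ : MeasureTheory.Measure ℝ} (h0 : μ Set.univ ≠ 0)
    (htop : μ Set.univ ≠ ⊤) : MeasureTheory.IsProbabilityMeasure (mnormalize μ) := by
  constructor
  rw [mnormalize_apply, ENNReal.inv_mul_cancel h0 htop]

lemma mnormalize_smul (μ : MeasureTheory.Measure ℝ) {c : ℝ≥0∞} (hc : c ≠ 0) (hc' : c ≠ ⊤) :
    mnormalize (c • μ) = mnormalize μ := by
  unfold mnormalize
  rw [MeasureTheory.Measure.smul_apply, smul_smul, smul_eq_mul,
    ENNReal.mul_inv (Or.inl hc) (Or.inl hc')]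
  congr 1
  rw [mul_comm c⁻¹, mul_assoc, ENNReal.inv_mul_cancel hc hc', mul_one]

lemma mnormalize_absCont (μ : MeasureTheory.Measure ℝ) : mnormalize μ ≪ μ := by
  intro s hs
  rw [mnormalize_apply, hs, mul_zero]

end Aux2
section MuE

open ENNReal MeasureTheory

def rhoD (a b : ℝ) (n m : ℕ) (x : Fin m → ℝ) : ℝ → ℝ≥0∞ :=
  fun y => ENNReal.ofReal (∏ i : Fin m, (1 - kfun a b (x i) y / n))

lemma muExplored_eq (a b : ℝ) (ν : Measure ℝ) (n m : ℕ) (x : Fin m → ℝ) :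
    muExplored a b ν n m x = mnormalize ((typeLaw ν).withDensity (rhoD a b n m x)) := rfl

lemma rhoD_measurable (a b : ℝ) (n m : ℕ) (x : Fin m → ℝ) : Measurable (rhoD a b n m x) := by
  apply Measurable.ennreal_ofReal
  apply Finset.measurable_prod
  intro i _
  exact measurable_const.sub ((kfun_measurable a b (x i)).div_const _)

variable {a b φmin φmax : ℝ}

lemma prodfac_bounds (ha : 0 < a) (hb : 0 < b) (hφmin : 0 < φmin) (hφ : φmin ≤ φmax)
    {n m : ℕ} (hn : kfunMax a b φmax < n) {x : Fin m → ℝ}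
    (hx : ∀ i, |x i| ∈ Set.Icc φmin φmax) {y : ℝ} (hy : |y| ∈ Set.Icc φmin φmax) :
    (1 - kfunMax a b φmax / n) ^ m ≤ (∏ i : Fin m, (1 - kfun a b (x i) y / n)) ∧
      (∏ i : Fin m, (1 - kfun a b (x i) y / n)) ≤ 1 ∧
      1 - m * (kfunMax a b φmax / n) ≤ (∏ i : Fin m, (1 - kfun a b (x i) y / n)) := by
  have hkM : 0 < kfunMax a b φmax := kfunMax_pos ha hb hφmin hφ
  have hnpos : (0:ℝ) < n := lt_trans hkM hn
  have hMn : kfunMax a b φmax / n < 1 := (div_lt_one hnpos).mpr hn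
  have hMn0 : 0 ≤ kfunMax a b φmax / n := le_of_lt (div_pos hkM hnpos)
  have hfacub : ∀ i : Fin m, kfun a b (x i) y / n ≤ kfunMax a b φmax / n := by
    intro i
    have h := kfun_le ha hb hφmin (hx i) hy
    gcongr
  have hfaclb : ∀ i : Fin m, 0 ≤ kfun a b (x i) y / n := by
    intro i
    exact div_nonneg (kfun_nonneg ha hb _ _) hnpos.le
  refine ⟨?_, ?_, ?_⟩
  · have : (1 - kfunMax a b φmax / n) ^ m
        = ∏ _i : Fin m, (1 - kfunMax a b φmax / n) := by
      rw [Finset.prod_const, Finset.card_univ, Fintype.card_fin]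
    rw [this]
    apply Finset.prod_le_prod
    · intro i _; linarith
    · intro i _; have := hfacub i; linarith
  · apply Finset.prod_le_one
    · intro i _
      have := hfacub i; linarith
    · intro i _
      have := hfaclb i; linarith
  · have hW := weier Finset.univ (fun i : Fin m => kfun a b (x i) y / n)
      (fun i _ => hfaclb i) (fun i _ => le_trans (hfacub i) hMn.le)
    have hsum : ∑ i : Fin m, kfun a b (x i) y / n ≤ m * (kfunMax a b φmax / n) := by
      calc ∑ i : Fin m, kfun a b (x i) y / n
          ≤ ∑ _i : Fin m, kfunMax a b φmax / n := Finset.sum_le_sum (fun i _ => hfacub i)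
        _ = m * (kfunMax a b φmax / n) := by
            rw [Finset.sum_const, Finset.card_univ, Fintype.card_fin, nsmul_eq_mul]
    linarith

end MuE
section MuE2

open ENNReal MeasureTheory

variable {a b φmin φmax : ℝ} {ν : MeasureTheory.Measure ℝ}

lemma muE_mass_bounds [IsProbabilityMeasure ν]
    (ha : 0 < a) (hb : 0 < b) (hφmin : 0 < φmin) (hφ : φmin ≤ φmax)
    (hsupp : ∀ᵐ x ∂ν, x ∈ Set.Icc φmin φmax)
    {n m : ℕ} (hn : kfunMax a b φmax < n) {x : Fin m → ℝ}
    (hx : ∀ i, |x i| ∈ Set.Icc φmin φmax) :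
    ENNReal.ofReal ((1 - kfunMax a b φmax / n) ^ m)
      ≤ ((typeLaw ν).withDensity (rhoD a b n m x)) Set.univ ∧
    ((typeLaw ν).withDensity (rhoD a b n m x)) Set.univ ≤ 1 := by
  haveI := typeLaw_isProb ν
  have hae := typeLaw_ae_supp ν hφmin hsupp
  rw [withDensity_apply _ MeasurableSet.univ, setLIntegral_univ]
  constructor
  · calc ENNReal.ofReal ((1 - kfunMax a b φmax / n) ^ m)
        = ∫⁻ _y, ENNReal.ofReal ((1 - kfunMax a b φmax / n) ^ m) ∂(typeLaw ν) := by
          rw [lintegral_const, measure_univ, mul_one]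
      _ ≤ ∫⁻ y, rhoD a b n m x y ∂(typeLaw ν) := by
          apply lintegral_mono_ae
          filter_upwards [hae] with y hy
          exact ENNReal.ofReal_le_ofReal (prodfac_bounds ha hb hφmin hφ hn hx hy).1
  · calc ∫⁻ y, rhoD a b n m x y ∂(typeLaw ν)
        ≤ ∫⁻ _y, 1 ∂(typeLaw ν) := by
          apply lintegral_mono_ae
          filter_upwards [hae] with y hy
          exact ENNReal.ofReal_le_one.mpr (prodfac_bounds ha hb hφmin hφ hn hx hy).2.1
      _ = 1 := by rw [lintegral_one, measure_univ]

lemma muE_mass_pos [IsProbabilityMeasure ν]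
    (ha : 0 < a) (hb : 0 < b) (hφmin : 0 < φmin) (hφ : φmin ≤ φmax)
    (hsupp : ∀ᵐ x ∂ν, x ∈ Set.Icc φmin φmax)
    {n m : ℕ} (hn : kfunMax a b φmax < n) {x : Fin m → ℝ}
    (hx : ∀ i, |x i| ∈ Set.Icc φmin φmax) :
    ((typeLaw ν).withDensity (rhoD a b n m x)) Set.univ ≠ 0 ∧
    ((typeLaw ν).withDensity (rhoD a b n m x)) Set.univ ≠ ⊤ := by
  obtain ⟨h1, h2⟩ := muE_mass_bounds ha hb hφmin hφ hsupp hn hx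
  have hkM : 0 < kfunMax a b φmax := kfunMax_pos ha hb hφmin hφ
  have hnpos : (0:ℝ) < n := lt_trans hkM hn
  have hMn : kfunMax a b φmax / n < 1 := (div_lt_one hnpos).mpr hn
  constructor
  · intro h0
    rw [h0] at h1
    have : (0:ℝ) < (1 - kfunMax a b φmax / n) ^ m := pow_pos (by linarith) m
    exact absurd h1 (by simp [ENNReal.ofReal_pos.mpr this, (ENNReal.ofReal_pos.mpr this).ne'])
  · exact ne_top_of_le_ne_top ENNReal.one_ne_top h2

lemma muExplored_isProb [IsProbabilityMeasure ν]
    (ha : 0 < a) (hb : 0 < b) (hφmin : 0 < φmin) (hφ : φmin ≤ φmax)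
    (hsupp : ∀ᵐ x ∂ν, x ∈ Set.Icc φmin φmax)
    {n m : ℕ} (hn : kfunMax a b φmax < n) {x : Fin m → ℝ}
    (hx : ∀ i, |x i| ∈ Set.Icc φmin φmax) :
    IsProbabilityMeasure (muExplored a b ν n m x) := by
  obtain ⟨h0, ht⟩ := muE_mass_pos ha hb hφmin hφ hsupp hn hx
  rw [muExplored_eq]
  exact mnormalize_isProb h0 ht

lemma muExplored_ae_supp [IsProbabilityMeasure ν] (hφmin : 0 < φmin)
    (hsupp : ∀ᵐ x ∂ν, x ∈ Set.Icc φmin φmax)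
    (n m : ℕ) (x : Fin m → ℝ) :
    ∀ᵐ y ∂(muExplored a b ν n m x), |y| ∈ Set.Icc φmin φmax := by
  have habs : muExplored a b ν n m x ≪ typeLaw ν := by
    rw [muExplored_eq]
    exact (mnormalize_absCont _).trans (withDensity_absolutelyContinuous _ _)
  exact habs.ae_le (typeLaw_ae_supp ν hφmin hsupp)

lemma kernelBiased_mnormalize (μ : Measure ℝ) (h0 : μ Set.univ ≠ 0)
    (ht : μ Set.univ ≠ ⊤) (a b xu : ℝ) :
    kernelBiased a b (mnormalize μ) xu
      = mnormalize (μ.withDensity fun y => ENNReal.ofReal (kfun a b xu y)) := by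
  calc kernelBiased a b (mnormalize μ) xu
      = mnormalize (((μ Set.univ)⁻¹ • μ).withDensity
          fun y => ENNReal.ofReal (kfun a b xu y)) := rfl
    _ = mnormalize ((μ Set.univ)⁻¹ •
          μ.withDensity fun y => ENNReal.ofReal (kfun a b xu y)) := by
        rw [withDensity_smul_measure]
    _ = mnormalize (μ.withDensity fun y => ENNReal.ofReal (kfun a b xu y)) :=
        mnormalize_smul _ (ENNReal.inv_ne_zero.mpr ht) (ENNReal.inv_ne_top.mpr h0)

lemma kernelBiased_muExplored_eq [IsProbabilityMeasure ν]
    (ha : 0 < a) (hb : 0 < b) (hφmin : 0 < φmin) (hφ : φmin ≤ φmax)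
    (hsupp : ∀ᵐ x ∂ν, x ∈ Set.Icc φmin φmax)
    {n m : ℕ} (hn : kfunMax a b φmax < n) {x : Fin m → ℝ}
    (hx : ∀ i, |x i| ∈ Set.Icc φmin φmax) (xu : ℝ) :
    kernelBiased a b (muExplored a b ν n m x) xu
      = mnormalize ((typeLaw ν).withDensity
          (rhoD a b n m x * fun y => ENNReal.ofReal (kfun a b xu y))) := by
  obtain ⟨h0, ht⟩ := muE_mass_pos ha hb hφmin hφ hsupp hn hx
  rw [muExplored_eq, kernelBiased_mnormalize _ h0 ht,
    withDensity_mul (typeLaw ν) (rhoD_measurable a b n m x)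
      ((kfun_measurable a b xu).ennreal_ofReal)]

end MuE2
section TV

open ENNReal MeasureTheory

lemma ratio_bound {i iA j jA km kM δ : ℝ} (hkm : 0 < km)
    (hi1 : km ≤ i) (hi2 : i ≤ kM) (hiA0 : 0 ≤ iA) (hiA : iA ≤ i)
    (hj : km / 2 ≤ j) (hjA0 : 0 ≤ jA) (hjA : jA ≤ iA)
    (h1 : iA ≤ jA + δ) (h2 : i ≤ j + δ) (hj2 : j ≤ i) (hδ : 0 ≤ δ) :
    |jA / j - iA / i| ≤ 4 * kM * δ / km ^ 2 := by
  have hjpos : 0 < j := lt_of_lt_of_le (by linarith) hj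
  have hipos : 0 < i := lt_of_lt_of_le hkm hi1
  have hkM : 0 < kM := lt_of_lt_of_le hipos hi2
  rw [div_sub_div _ _ hjpos.ne' hipos.ne', abs_div, abs_of_pos (mul_pos hjpos hipos)]
  have hnum : |jA * i - j * iA| ≤ 2 * kM * δ := by
    have h3 : jA * i - j * iA = (jA - iA) * i + iA * (i - j) := by ring
    rw [h3]
    calc |(jA - iA) * i + iA * (i - j)|
        ≤ |(jA - iA) * i| + |iA * (i - j)| := abs_add_le _ _
      _ = |jA - iA| * |i| + |iA| * |i - j| := by rw [abs_mul, abs_mul]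
      _ ≤ δ * kM + kM * δ := by
          apply add_le_add
          · apply mul_le_mul
            · rw [abs_le]; constructor <;> linarith
            · rw [abs_of_pos hipos]; linarith
            · exact abs_nonneg _
            · exact hδ
          · apply mul_le_mul
            · rw [abs_of_nonneg hiA0]; linarith
            · rw [abs_le]; constructor <;> linarith
            · exact abs_nonneg _
            · exact hkM.le
      _ = 2 * kM * δ := by ring
  have hden : km ^ 2 / 2 ≤ j * i := by nlinarith
  calc |jA * i - j * iA| / (j * i)
      ≤ (2 * kM * δ) / (km ^ 2 / 2) :=
        div_le_div₀ (by positivity) hnum (by positivity) hden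
    _ = 4 * kM * δ / km ^ 2 := by
        field_simp
        ring

variable {a b φmin φmax : ℝ} {ν : MeasureTheory.Measure ℝ}

lemma tv_main [IsProbabilityMeasure ν]
    (ha : 0 < a) (hb : 0 < b) (hφmin : 0 < φmin) (hφ : φmin ≤ φmax)
    (hsupp : ∀ᵐ x ∂ν, x ∈ Set.Icc φmin φmax) :
    ∀ m' : ℕ, ∃ N : ℕ, ∀ n' : ℕ, N ≤ n' →
      ∀ x' : Fin m' → ℝ, (∀ i, |x' i| ∈ Set.Icc φmin φmax) →
      ∀ xu' : ℝ, |xu'| ∈ Set.Icc φmin φmax →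
      ∀ A : Set ℝ, MeasurableSet A →
        |(kernelBiased a b (muExplored a b ν n' m' x') xu' A).toReal
            - (kernelBiased a b (typeLaw ν) xu' A).toReal|
          ≤ 4 * kfunMax a b φmax ^ 3 / kfunMin a b φmin ^ 2 * m' / n' := by
  haveI := typeLaw_isProb ν
  set kM := kfunMax a b φmax with hkMdef
  set km := kfunMin a b φmin with hkmdef
  have hkM : 0 < kM := kfunMax_pos ha hb hφmin hφ
  have hkm : 0 < km := kfunMin_pos ha hb hφmin
  have hkmM : km ≤ kM := by
    have h1 := le_kfun ha hb hφmin (x := φmin) (y := φmin)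
      (by rw [abs_of_pos hφmin]; exact ⟨le_refl _, hφ⟩)
      (by rw [abs_of_pos hφmin]; exact ⟨le_refl _, hφ⟩)
    have h2 := kfun_le ha hb hφmin (x := φmin) (y := φmin)
      (by rw [abs_of_pos hφmin]; exact ⟨le_refl _, hφ⟩)
      (by rw [abs_of_pos hφmin]; exact ⟨le_refl _, hφ⟩)
    linarith
  intro m'
  refine ⟨Nat.ceil (2 * kM * (m' + 1)) + 1, ?_⟩
  intro n' hn' x' hx' xu' hxu' A hA
  -- basic numeric facts about n'
  have hn'R : 2 * kM * (m' + 1) ≤ (n' : ℝ) := by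
    calc 2 * kM * (m' + 1) ≤ (Nat.ceil (2 * kM * (m' + 1)) : ℝ) := Nat.le_ceil _
      _ ≤ (n' : ℝ) := by
        have : (Nat.ceil (2 * kM * (m' + 1)) : ℝ) ≤ (Nat.ceil (2 * kM * (m' + 1)) + 1 : ℕ) := by
          push_cast; linarith
        exact le_trans this (Nat.cast_le.mpr hn')
  have hmn : (1:ℝ) ≤ (m' : ℝ) + 1 := by { have := Nat.cast_nonneg (α := ℝ) m'; linarith }
  have hm0 : (0:ℝ) ≤ m' := Nat.cast_nonneg m'
  have hn : kM < (n' : ℝ) := by nlinarith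
  have hnpos : (0 : ℝ) < n' := lt_trans hkM hn
  have hhalf : (m' : ℝ) * (kM / n') ≤ 1 / 2 := by
    rw [mul_div_assoc', div_le_div_iff₀ hnpos (by norm_num : (0:ℝ) < 2)]
    nlinarith
  -- representation of the two measures
  have hrep := kernelBiased_muExplored_eq ha hb hφmin hφ hsupp (n := n') (m := m') hn hx' xu'
  have hae := typeLaw_ae_supp ν hφmin hsupp
  set κt : ℝ → ℝ≥0∞ := fun y => ENNReal.ofReal (kfun a b xu' y) with hκt
  set ft : ℝ → ℝ≥0∞ := rhoD a b n' m' x' * κt with hft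
  have hκtm : Measurable κt := (kfun_measurable a b xu').ennreal_ofReal
  have hftm : Measurable ft := (rhoD_measurable a b n' m' x').mul hκtm
  set μ0 := typeLaw ν with hμ0
  set δ : ℝ := kM * ((m' : ℝ) * (kM / n')) with hδdef
  have hδ0 : 0 ≤ δ := by positivity
  set I := ∫⁻ y, κt y ∂μ0 with hI
  set IA := ∫⁻ y in A, κt y ∂μ0 with hIA
  set J := ∫⁻ y, ft y ∂μ0 with hJ
  set JA := ∫⁻ y in A, ft y ∂μ0 with hJA
  have hval1 : kernelBiased a b (muExplored a b ν n' m' x') xu' A = J⁻¹ * JA := by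
    rw [hrep, mnormalize_apply, withDensity_apply _ MeasurableSet.univ,
      withDensity_apply _ hA, setLIntegral_univ]
  have hval2 : kernelBiased a b μ0 xu' A = I⁻¹ * IA := by
    unfold kernelBiased
    rw [mnormalize_apply, withDensity_apply _ MeasurableSet.univ,
      withDensity_apply _ hA, setLIntegral_univ]
  -- pointwise a.e. facts
  have hpt : ∀ᵐ y ∂μ0, (ENNReal.ofReal km ≤ κt y ∧ κt y ≤ ENNReal.ofReal kM) ∧
      ft y ≤ κt y ∧ ENNReal.ofReal (km / 2) ≤ ft y ∧
      κt y ≤ ft y + ENNReal.ofReal δ := by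
    filter_upwards [hae] with y hy
    have hk1 : km ≤ kfun a b xu' y := le_kfun ha hb hφmin hxu' hy
    have hk2 : kfun a b xu' y ≤ kM := kfun_le ha hb hφmin hxu' hy
    have hk0 : 0 ≤ kfun a b xu' y := kfun_nonneg ha hb _ _
    obtain ⟨hP1, hP2, hP3⟩ := prodfac_bounds ha hb hφmin hφ hn hx' hy
    set P := ∏ i : Fin m', (1 - kfun a b (x' i) y / n') with hPdef
    have hchalf : (1:ℝ)/2 ≤ 1 - (m' : ℝ) * (kM / n') := by linarith
    have hPhalf : (1:ℝ)/2 ≤ P := le_trans hchalf hP3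
    have hP0 : (0:ℝ) ≤ P := by linarith
    have hfy : ft y = ENNReal.ofReal (P * kfun a b xu' y) := by
      show rhoD a b n' m' x' y * κt y = _
      rw [ENNReal.ofReal_mul hP0]
      rfl
    have hκy : κt y = ENNReal.ofReal (kfun a b xu' y) := rfl
    refine ⟨⟨ENNReal.ofReal_le_ofReal hk1, ENNReal.ofReal_le_ofReal hk2⟩, ?_, ?_, ?_⟩
    · rw [hfy, hκy]
      apply ENNReal.ofReal_le_ofReal
      nlinarith
    · rw [hfy]
      apply ENNReal.ofReal_le_ofReal
      nlinarith [mul_nonneg (sub_nonneg.mpr hPhalf) hk0]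
    · have hreal : kfun a b xu' y ≤ P * kfun a b xu' y + δ := by
        have h1 : (1 - P) * kfun a b xu' y ≤ ((m' : ℝ) * (kM / n')) * kM := by
          apply mul_le_mul _ hk2 hk0 _
          · linarith
          · positivity
        nlinarith
      rw [hfy, hκy, ← ENNReal.ofReal_add (by positivity) hδ0]
      exact ENNReal.ofReal_le_ofReal hreal
  have hpt1 := hpt.mono fun y h => h.1.1
  have hpt2 := hpt.mono fun y h => h.1.2
  have hpt3 := hpt.mono fun y h => h.2.1
  have hpt4 := hpt.mono fun y h => h.2.2.1
  have hpt5 := hpt.mono fun y h => h.2.2.2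
  -- integral bounds
  have hI1 : ENNReal.ofReal km ≤ I := by
    calc ENNReal.ofReal km = ∫⁻ _y, ENNReal.ofReal km ∂μ0 := by
          rw [lintegral_const, measure_univ, mul_one]
      _ ≤ I := lintegral_mono_ae hpt1
  have hI2 : I ≤ ENNReal.ofReal kM := by
    calc I ≤ ∫⁻ _y, ENNReal.ofReal kM ∂μ0 := lintegral_mono_ae hpt2
      _ = ENNReal.ofReal kM := by rw [lintegral_const, measure_univ, mul_one]
  have hIAle : IA ≤ I := setLIntegral_le_lintegral _ _
  have hJle : J ≤ I := lintegral_mono_ae hpt3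
  have hJAle : JA ≤ IA := lintegral_mono_ae (ae_restrict_of_ae hpt3)
  have hJlb : ENNReal.ofReal (km / 2) ≤ J := by
    calc ENNReal.ofReal (km / 2) = ∫⁻ _y, ENNReal.ofReal (km / 2) ∂μ0 := by
          rw [lintegral_const, measure_univ, mul_one]
      _ ≤ J := lintegral_mono_ae hpt4
  have hIJ : I ≤ J + ENNReal.ofReal δ := by
    calc I ≤ ∫⁻ y, (ft y + ENNReal.ofReal δ) ∂μ0 := lintegral_mono_ae hpt5
      _ = J + ENNReal.ofReal δ := by
          rw [lintegral_add_right _ measurable_const, lintegral_const, measure_univ, mul_one]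
  have hIAJA : IA ≤ JA + ENNReal.ofReal δ := by
    calc IA ≤ ∫⁻ y in A, (ft y + ENNReal.ofReal δ) ∂μ0 :=
          lintegral_mono_ae (ae_restrict_of_ae hpt5)
      _ = JA + ENNReal.ofReal δ * μ0 A := by
          rw [lintegral_add_right _ measurable_const, setLIntegral_const]
      _ ≤ JA + ENNReal.ofReal δ * 1 := by
          gcongr
          exact prob_le_one
      _ = JA + ENNReal.ofReal δ := by rw [mul_one]
  -- finiteness
  have hIfin : I ≠ ⊤ := (lt_of_le_of_lt hI2 ENNReal.ofReal_lt_top).ne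
  have hJfin : J ≠ ⊤ := (lt_of_le_of_lt (hJle.trans hI2) ENNReal.ofReal_lt_top).ne
  have hIAfin : IA ≠ ⊤ := (lt_of_le_of_lt (hIAle.trans hI2) ENNReal.ofReal_lt_top).ne
  have hJAfin : JA ≠ ⊤ := (lt_of_le_of_lt ((hJAle.trans hIAle).trans hI2) ENNReal.ofReal_lt_top).ne
  -- pass to reals
  set i := I.toReal
  set iA := IA.toReal
  set j := J.toReal
  set jA := JA.toReal
  have hri1 : km ≤ i := by
    have := (ENNReal.toReal_le_toReal ENNReal.ofReal_ne_top hIfin).mpr hI1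
    rwa [ENNReal.toReal_ofReal hkm.le] at this
  have hri2 : i ≤ kM := by
    have := (ENNReal.toReal_le_toReal hIfin ENNReal.ofReal_ne_top).mpr hI2
    rwa [ENNReal.toReal_ofReal hkM.le] at this
  have hriA : iA ≤ i := (ENNReal.toReal_le_toReal hIAfin hIfin).mpr hIAle
  have hrj : km / 2 ≤ j := by
    have := (ENNReal.toReal_le_toReal ENNReal.ofReal_ne_top hJfin).mpr hJlb
    rwa [ENNReal.toReal_ofReal (by positivity)] at this
  have hrjA : jA ≤ iA := (ENNReal.toReal_le_toReal hJAfin hIAfin).mpr hJAle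
  have hrji : j ≤ i := (ENNReal.toReal_le_toReal hJfin hIfin).mpr hJle
  have hr1 : iA ≤ jA + δ := by
    have := (ENNReal.toReal_le_toReal hIAfin
      (by finiteness : JA + ENNReal.ofReal δ ≠ ⊤)).mpr hIAJA
    rwa [ENNReal.toReal_add hJAfin ENNReal.ofReal_ne_top, ENNReal.toReal_ofReal hδ0] at this
  have hr2 : i ≤ j + δ := by
    have := (ENNReal.toReal_le_toReal hIfin
      (by finiteness : J + ENNReal.ofReal δ ≠ ⊤)).mpr hIJ
    rwa [ENNReal.toReal_add hJfin ENNReal.ofReal_ne_top, ENNReal.toReal_ofReal hδ0] at this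
  have hbound := ratio_bound hkm hri1 hri2 ENNReal.toReal_nonneg hriA hrj
    ENNReal.toReal_nonneg hrjA hr1 hr2 hrji hδ0
  rw [hval1, hval2, ENNReal.toReal_mul, ENNReal.toReal_mul, ENNReal.toReal_inv,
    ENNReal.toReal_inv, inv_mul_eq_div, inv_mul_eq_div]
  calc |jA / j - iA / i| ≤ 4 * kM * δ / km ^ 2 := hbound
    _ = 4 * kM ^ 3 / km ^ 2 * m' / n' := by
        rw [hδdef]
        ring

end TV

section Indep

open MeasureTheory ProbabilityTheory ENNReal

lemma indep_lintegral_prod {Ω : Type} [MeasurableSpace Ω] {P : Measure Ω}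
    [IsProbabilityMeasure P] {k : ℕ}
    (T : Fin k → Ω → ℝ × Bool)
    (hT : iIndepFun (β := fun _ : Fin k => ℝ × Bool) T P)
    (hTm : ∀ j, Measurable (T j))
    (h : Fin k → ℝ × Bool → ℝ≥0∞) (hh : ∀ j, Measurable (h j)) (S : Finset (Fin k)) :
    ∫⁻ ω, ∏ j ∈ S, h j (T j ω) ∂P = ∏ j ∈ S, ∫⁻ ω, h j (T j ω) ∂P := by
  classical
  induction S using Finset.induction_on with
  | empty => simp
  | insert i S hnot ih =>
    have hbase := hT.indepFun_finset {i} S (Finset.disjoint_singleton_left.mpr hnot) hTm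
    have hφm : Measurable fun g : ({i} : Finset (Fin k)) → ℝ × Bool =>
        h i (g ⟨i, Finset.mem_singleton_self i⟩) :=
      (hh i).comp (measurable_pi_apply _)
    have hψm : Measurable fun g : S → ℝ × Bool =>
        ∏ j : S, h j (g j) :=
      Finset.measurable_prod _ fun j _ => (hh j).comp (measurable_pi_apply j)
    have hcomp := hbase.comp hφm hψm
    have hind : IndepFun (fun ω => h i (T i ω))
        (fun ω => ∏ j : S, h (j : Fin k) (T (j : Fin k) ω)) P := hcomp
    have hprodeq : ∀ ω, (∏ j ∈ S, h j (T j ω))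
        = ∏ j : S, h (j : Fin k) (T (j : Fin k) ω) :=
      fun ω => (Finset.prod_coe_sort S fun j => h j (T j ω)).symm
    have hmeas1 : Measurable fun ω => h i (T i ω) := (hh i).comp (hTm i)
    have hmeas2 : Measurable fun ω => ∏ j : S,
        h (j : Fin k) (T (j : Fin k) ω) :=
      Finset.measurable_prod _ fun j _ => (hh j).comp (hTm j)
    calc ∫⁻ ω, ∏ j ∈ insert i S, h j (T j ω) ∂P
        = ∫⁻ ω, h i (T i ω) * ∏ j ∈ S, h j (T j ω) ∂P := by
          apply lintegral_congr
          intro ω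
          rw [Finset.prod_insert hnot]
      _ = ∫⁻ ω, ((fun ω => h i (T i ω)) * fun ω => ∏ j : S,
            h (j : Fin k) (T (j : Fin k) ω)) ω ∂P := by
          apply lintegral_congr
          intro ω
          simp only [Pi.mul_apply]
          rw [hprodeq ω]
      _ = (∫⁻ ω, h i (T i ω) ∂P) * ∫⁻ ω, (∏ j : S,
            h (j : Fin k) (T (j : Fin k) ω)) ∂P :=
          lintegral_mul_eq_lintegral_mul_lintegral_of_indepFun hmeas1 hmeas2 hind
      _ = (∫⁻ ω, h i (T i ω) ∂P) * ∫⁻ ω, (∏ j ∈ S, h j (T j ω)) ∂P := by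
          congr 1
          apply lintegral_congr
          intro ω
          rw [hprodeq ω]
      _ = (∫⁻ ω, h i (T i ω) ∂P) * ∏ j ∈ S, ∫⁻ ω, h j (T j ω) ∂P := by rw [ih]
      _ = ∏ j ∈ insert i S, ∫⁻ ω, h j (T j ω) ∂P := by rw [Finset.prod_insert hnot]

end Indep

section Key

open MeasureTheory ProbabilityTheory ENNReal

lemma key_comb {Ω : Type} [MeasurableSpace Ω] {P : Measure Ω} [IsProbabilityMeasure P] {k : ℕ}
    (Y : Fin k → Ω → ℝ) (e : Fin k → Ω → Bool)
    (hYmeas : ∀ j, Measurable (Y j)) (hemeas : ∀ j, Measurable (e j))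
    (hindep : iIndepFun (β := fun _ : Fin k => ℝ × Bool)
      (fun j ω => (Y j ω, e j ω)) P)
    (η : Measure ℝ)
    (hmap : ∀ j, Measure.map (Y j) (P.restrict {ω | e j ω = true}) = η)
    (g : ℝ → ℝ≥0∞) (hg : Measurable g) (d : ℕ) :
    ∫⁻ ω, Set.indicator {ω | (Finset.univ.filter fun j : Fin k => e j ω = true).card = d}
        (fun ω => ∏ j ∈ Finset.univ.filter (fun j : Fin k => e j ω = true), g (Y j ω)) ω ∂P
      = (k.choose d : ℝ≥0∞) * (∫⁻ y, g y ∂η) ^ d * (1 - η Set.univ) ^ (k - d) := by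
  classical
  set φ : Finset (Fin k) → Fin k → ℝ × Bool → ℝ≥0∞ := fun S j p =>
    if j ∈ S then (if p.2 = true then g p.1 else 0) else (if p.2 = true then 0 else 1) with hφ
  have hset : MeasurableSet {p : ℝ × Bool | p.2 = true} :=
    measurable_snd (measurableSet_singleton true)
  have hφmeas : ∀ S j, Measurable (φ S j) := by
    intro S j
    by_cases hj : j ∈ S <;> simp only [hφ, hj, if_true, if_false]
    · exact Measurable.ite hset (hg.comp measurable_fst) measurable_const
    · exact Measurable.ite hset measurable_const measurable_const
  -- pointwise decomposition
  have hpt : ∀ ω, Set.indicator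
      {ω | (Finset.univ.filter fun j : Fin k => e j ω = true).card = d}
      (fun ω => ∏ j ∈ Finset.univ.filter (fun j : Fin k => e j ω = true), g (Y j ω)) ω
      = ∑ S ∈ Finset.powersetCard d Finset.univ, ∏ j, φ S j (Y j ω, e j ω) := by
    intro ω
    set Aω := Finset.univ.filter (fun j : Fin k => e j ω = true) with hAω
    have hmem : ∀ j, j ∈ Aω ↔ e j ω = true := by
      intro j; simp [hAω]
    have hzero : ∀ S : Finset (Fin k), S ≠ Aω → ∏ j, φ S j (Y j ω, e j ω) = 0 := by
      intro S hS
      obtain ⟨j, hj⟩ := Finset.symmDiff_nonempty.mpr hS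
      rw [Finset.mem_symmDiff] at hj
      rcases hj with ⟨hjS, hjA⟩ | ⟨hjA, hjS⟩
      · apply Finset.prod_eq_zero (Finset.mem_univ j)
        have h1 : ¬ e j ω = true := fun h => hjA ((hmem j).mpr h)
        simp [hφ, hjS, h1]
      · apply Finset.prod_eq_zero (Finset.mem_univ j)
        have h1 : e j ω = true := (hmem j).mp hjA
        simp [hφ, hjS, h1]
    by_cases hd : Aω.card = d
    · have hin : ω ∈ {ω | (Finset.univ.filter fun j : Fin k => e j ω = true).card = d} := hd
      rw [Set.indicator_of_mem hin]
      have hAmem : Aω ∈ Finset.powersetCard d Finset.univ := by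
        rw [Finset.mem_powersetCard]; exact ⟨Finset.subset_univ _, hd⟩
      rw [Finset.sum_eq_single_of_mem Aω hAmem (fun S _ hS => hzero S hS)]
      calc ∏ j ∈ Aω, g (Y j ω)
          = ∏ j ∈ Aω, φ Aω j (Y j ω, e j ω) := by
            apply Finset.prod_congr rfl
            intro j hj
            have h1 : e j ω = true := (hmem j).mp hj
            simp [hφ, hj, h1]
        _ = ∏ j, φ Aω j (Y j ω, e j ω) := by
            apply Finset.prod_subset (Finset.subset_univ _)
            intro j _ hj
            have h1 : ¬ e j ω = true := fun h => hj ((hmem j).mpr h)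
            simp [hφ, hj, h1]
    · have hnin : ω ∉ {ω | (Finset.univ.filter fun j : Fin k => e j ω = true).card = d} := hd
      rw [Set.indicator_of_notMem hnin]
      symm
      apply Finset.sum_eq_zero
      intro S hS
      exact hzero S (fun hSA => hd (hSA ▸ (Finset.mem_powersetCard.mp hS).2))
  -- factor evaluation
  have hfactor : ∀ (S : Finset (Fin k)) (j : Fin k),
      ∫⁻ ω, φ S j (Y j ω, e j ω) ∂P
        = if j ∈ S then (∫⁻ y, g y ∂η) else (1 - η Set.univ) := by
    intro S j
    have hse : MeasurableSet {ω | e j ω = true} := hemeas j (measurableSet_singleton true)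
    by_cases hj : j ∈ S <;> simp only [hφ, hj, if_true, if_false]
    · have h1 : ∀ ω, (if e j ω = true then g (Y j ω) else 0)
          = Set.indicator {ω | e j ω = true} (fun ω => g (Y j ω)) ω := by
        intro ω; by_cases h : e j ω = true <;> simp [h, Set.indicator_apply]
      rw [lintegral_congr h1, lintegral_indicator hse, ← hmap j,
        lintegral_map hg (hYmeas j)]
    · have h1 : ∀ ω, (if e j ω = true then (0:ℝ≥0∞) else 1)
          = Set.indicator {ω | e j ω = true}ᶜ (fun _ => (1:ℝ≥0∞)) ω := by
        intro ω; by_cases h : e j ω = true <;> simp [h, Set.indicator_apply]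
      rw [lintegral_congr h1, lintegral_indicator hse.compl, setLIntegral_one,
        prob_compl_eq_one_sub hse]
      congr 1
      rw [← hmap j, Measure.map_apply (hYmeas j) MeasurableSet.univ, Set.preimage_univ,
        Measure.restrict_apply_univ]
  -- put it together
  rw [lintegral_congr hpt]
  rw [lintegral_finset_sum (f := fun S ω => ∏ j, φ S j (Y j ω, e j ω))
    (Finset.powersetCard d Finset.univ) (by
      intro S _
      exact Finset.measurable_prod _
        (fun j _ => (hφmeas S j).comp ((hYmeas j).prodMk (hemeas j))))]
  have hterm : ∀ S ∈ Finset.powersetCard d Finset.univ,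
      ∫⁻ ω, ∏ j, φ S j (Y j ω, e j ω) ∂P
        = (∫⁻ y, g y ∂η) ^ d * (1 - η Set.univ) ^ (k - d) := by
    intro S hS
    obtain ⟨-, hcard⟩ := Finset.mem_powersetCard.mp hS
    rw [indep_lintegral_prod (fun j ω => (Y j ω, e j ω)) hindep
      (fun j => (hYmeas j).prodMk (hemeas j)) (fun j => φ S j) (fun j => hφmeas S j)
      Finset.univ]
    calc ∏ j, ∫⁻ ω, φ S j (Y j ω, e j ω) ∂P
        = ∏ j, (if j ∈ S then (∫⁻ y, g y ∂η) else (1 - η Set.univ)) :=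
          Finset.prod_congr rfl (fun j _ => hfactor S j)
      _ = (∫⁻ y, g y ∂η) ^ d * (1 - η Set.univ) ^ (k - d) := by
          rw [Finset.prod_ite (fun _ => (∫⁻ y, g y ∂η)) (fun _ => (1 - η Set.univ)),
            Finset.prod_const, Finset.prod_const]
          congr 1
          · congr 1
            rw [Finset.filter_univ_mem]
            exact hcard
          · congr 1
            rw [Finset.filter_not]
            rw [Finset.card_sdiff_of_subset (Finset.filter_subset _ _)]
            rw [Finset.filter_univ_mem, Finset.card_univ, Fintype.card_fin, hcard]
  rw [Finset.sum_congr rfl hterm, Finset.sum_const, Finset.card_powersetCard,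
    Finset.card_univ, Fintype.card_fin, nsmul_eq_mul, mul_assoc]

end Key

section Final

open ENNReal

lemma ennreal_alg (u v w c : ℝ≥0∞) (hc : c ≠ 0) (hc' : c ≠ ⊤) (hw : w ≠ 0) (hw' : w ≠ ⊤)
    (hv : v ≠ 0) (hv' : v ≠ ⊤) : (c * v * w)⁻¹ * (c * u * w) = u * v⁻¹ := by
  rw [ENNReal.mul_inv (Or.inl (mul_ne_zero hc hv)) (Or.inr hw),
    ENNReal.mul_inv (Or.inl hc) (Or.inr hv)]
  calc c⁻¹ * v⁻¹ * w⁻¹ * (c * u * w) = c⁻¹ * c * (w⁻¹ * w) * (v⁻¹ * u) := by ring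
    _ = u * v⁻¹ := by
        rw [ENNReal.inv_mul_cancel hc hc', ENNReal.inv_mul_cancel hw hw', one_mul, one_mul,
          mul_comm]

end Final

open scoped ENNReal

/-- **Conditionally on their number, the types of the newly discovered neighbours are i.i.d.
with law `μ*^{(m)}_x`, which is close to `μ*_x`.**
In the exploration process of the DC-PPM, suppose the vertex `u` currently being explored has
type `x_u`; the unexplored vertices have i.i.d. types with law `μ^{(m)}` and are joined to `u`
independently with conditional probability `κ(x_u, ·)/n`.  Let `D` be the number of neighbours
of `u` among them.  Then, conditionally on `D = d`, the types of these `d` neighbours are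
i.i.d. with law `μ*^{(m)}_{x_u}` given by `dμ*^{(m)}_{x_u}(y) ∝ κ(x_u,y)·dμ^{(m)}(y)` (this is
expressed, as in the proof, through the Laplace functional: for every measurable `f ≥ 0`,
`E[∏_{j : u∼j} e^{-f(Y_j)} | D = d] = (∫ e^{-f} dμ*^{(m)}_{x_u})^d`).  Moreover, with `N_m` as
in the reservoir lemma, for `n ≥ N_m` the total variation distance between `μ*^{(m)}_x` and
`μ*_x` is at most `4·(κ_max³/κ_min²)·(m/n)`. -/
theorem stmt8
    (a b φmin φmax : ℝ) (ha : 0 < a) (hb : 0 < b)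
    (hφmin : 0 < φmin) (hφ : φmin ≤ φmax)
    (ν : Measure ℝ) (hν : IsProbabilityMeasure ν)
    (hsupp : ∀ᵐ x ∂ν, x ∈ Set.Icc φmin φmax)
    (n m k : ℕ) (hkn : kfunMax a b φmax < n)
    (x : Fin m → ℝ) (hx : ∀ i, |x i| ∈ Set.Icc φmin φmax)
    (xu : ℝ) (hxu : |xu| ∈ Set.Icc φmin φmax)
    (Ω : Type) [MeasurableSpace Ω] (P : Measure Ω) (hP : IsProbabilityMeasure P)
    (Y : Fin k → Ω → ℝ) (e : Fin k → Ω → Bool)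
    (hYmeas : ∀ j, Measurable (Y j)) (hemeas : ∀ j, Measurable (e j))
    (hindep : iIndepFun (β := fun _ : Fin k => ℝ × Bool)
      (fun j ω => (Y j ω, e j ω)) P)
    (hYlaw : ∀ j, Measure.map (Y j) P = muExplored a b ν n m x)
    (hlaw : ∀ j : Fin k, ∀ B : Set ℝ, MeasurableSet B →
      P {ω | Y j ω ∈ B ∧ e j ω = true}
        = ∫⁻ y in B, ENNReal.ofReal (kfun a b xu y / n) ∂(muExplored a b ν n m x)) :
    -- conditionally on `D = d`, the neighbour types are i.i.d. `μ*^{(m)}_{x_u}`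
    (∀ d : ℕ, d ≤ k → ∀ f : ℝ → ℝ, Measurable f → (∀ y, 0 ≤ f y) →
      ∫⁻ ω, ∏ j ∈ Finset.univ.filter (fun j : Fin k => e j ω = true),
          ENNReal.ofReal (Real.exp (-(f (Y j ω))))
          ∂(P[|{ω | (Finset.univ.filter fun j : Fin k => e j ω = true).card = d}])
        = (∫⁻ y, ENNReal.ofReal (Real.exp (-(f y)))
            ∂(kernelBiased a b (muExplored a b ν n m x) xu)) ^ d) ∧
    -- total variation bound between `μ*^{(m)}_x` and `μ*_x`
    (∀ m' : ℕ, ∃ N : ℕ, ∀ n' : ℕ, N ≤ n' →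
      ∀ x' : Fin m' → ℝ, (∀ i, |x' i| ∈ Set.Icc φmin φmax) →
      ∀ xu' : ℝ, |xu'| ∈ Set.Icc φmin φmax →
      ∀ A : Set ℝ, MeasurableSet A →
        |(kernelBiased a b (muExplored a b ν n' m' x') xu' A).toReal
            - (kernelBiased a b (typeLaw ν) xu' A).toReal|
          ≤ 4 * kfunMax a b φmax ^ 3 / kfunMin a b φmin ^ 2 * m' / n') := by
  haveI := hν
  haveI := hP
  have hkM : 0 < kfunMax a b φmax := kfunMax_pos ha hb hφmin hφ
  have hkm : 0 < kfunMin a b φmin := kfunMin_pos ha hb hφmin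
  have hnR : (0:ℝ) < n := lt_trans hkM hkn
  have hnNat : n ≠ 0 := (Nat.cast_pos.mp hnR).ne'
  have hnE0 : (n : ℝ≥0∞) ≠ 0 := Nat.cast_ne_zero.mpr hnNat
  have hnETop : (n : ℝ≥0∞) ≠ ⊤ := ENNReal.natCast_ne_top n
  set μm := muExplored a b ν n m x with hμm
  haveI hμmP : IsProbabilityMeasure μm := muExplored_isProb ha hb hφmin hφ hsupp hkn hx
  have hμae : ∀ᵐ y ∂μm, |y| ∈ Set.Icc φmin φmax := muExplored_ae_supp hφmin hsupp n m x
  constructor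
  · intro d hd f hf hf0
    set dens : ℝ → ℝ≥0∞ := fun y => ENNReal.ofReal (kfun a b xu y / n) with hdens
    have hdensm : Measurable dens := ((kfun_measurable a b xu).div_const _).ennreal_ofReal
    set η := μm.withDensity dens with hη
    have hmap : ∀ j, Measure.map (Y j) (P.restrict {ω | e j ω = true}) = η := by
      intro j
      apply Measure.ext
      intro B hB
      rw [Measure.map_apply (hYmeas j) hB,
        Measure.restrict_apply ((hYmeas j) hB)]
      have hseteq : Y j ⁻¹' B ∩ {ω | e j ω = true} = {ω | Y j ω ∈ B ∧ e j ω = true} := by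
        ext ω; simp [Set.mem_inter_iff, Set.mem_preimage]
      rw [hseteq, hlaw j B hB, hη, withDensity_apply _ hB]
    set g : ℝ → ℝ≥0∞ := fun y => ENNReal.ofReal (Real.exp (-(f y))) with hg
    have hgm : Measurable g := (hf.neg).exp.ennreal_ofReal
    have hg1 : ∀ y, g y ≤ 1 := by
      intro y
      apply ENNReal.ofReal_le_one.mpr
      rw [Real.exp_le_one_iff]
      linarith [hf0 y]
    set κt : ℝ → ℝ≥0∞ := fun y => ENNReal.ofReal (kfun a b xu y) with hκt
    have hκtm : Measurable κt := (kfun_measurable a b xu).ennreal_ofReal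
    have hdenseq : ∀ y, dens y = κt y * ((n : ℝ≥0∞))⁻¹ := by
      intro y
      rw [hdens, hκt]
      simp only []
      rw [ENNReal.ofReal_div_of_pos hnR, ENNReal.ofReal_natCast, div_eq_mul_inv]
    have hXeq : (∫⁻ y, g y ∂η) = (∫⁻ y, κt y * g y ∂μm) * ((n : ℝ≥0∞))⁻¹ := by
      rw [hη, lintegral_withDensity_eq_lintegral_mul μm hdensm hgm]
      calc ∫⁻ y, (dens * g) y ∂μm
          = ∫⁻ y, (fun y => κt y * g y) y * ((n : ℝ≥0∞))⁻¹ ∂μm := by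
            apply lintegral_congr
            intro y
            rw [Pi.mul_apply, hdenseq y]
            ring
        _ = (∫⁻ y, κt y * g y ∂μm) * ((n : ℝ≥0∞))⁻¹ :=
            lintegral_mul_const' _ _ (ENNReal.inv_ne_top.mpr hnE0)
    have hpeq : η Set.univ = (∫⁻ y, κt y ∂μm) * ((n : ℝ≥0∞))⁻¹ := by
      rw [hη, withDensity_apply _ MeasurableSet.univ, setLIntegral_univ]
      calc ∫⁻ y, dens y ∂μm
          = ∫⁻ y, (fun y => κt y) y * ((n : ℝ≥0∞))⁻¹ ∂μm := lintegral_congr hdenseq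
        _ = (∫⁻ y, κt y ∂μm) * ((n : ℝ≥0∞))⁻¹ :=
            lintegral_mul_const' _ _ (ENNReal.inv_ne_top.mpr hnE0)
    have hβ1 : ENNReal.ofReal (kfunMin a b φmin) ≤ ∫⁻ y, κt y ∂μm := by
      calc ENNReal.ofReal (kfunMin a b φmin)
          = ∫⁻ _y, ENNReal.ofReal (kfunMin a b φmin) ∂μm := by
            rw [lintegral_const, measure_univ, mul_one]
        _ ≤ ∫⁻ y, κt y ∂μm := by
            apply lintegral_mono_ae
            filter_upwards [hμae] with y hy
            exact ENNReal.ofReal_le_ofReal (le_kfun ha hb hφmin hxu hy)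
    have hβ2 : (∫⁻ y, κt y ∂μm) ≤ ENNReal.ofReal (kfunMax a b φmax) := by
      calc (∫⁻ y, κt y ∂μm) ≤ ∫⁻ _y, ENNReal.ofReal (kfunMax a b φmax) ∂μm := by
            apply lintegral_mono_ae
            filter_upwards [hμae] with y hy
            exact ENNReal.ofReal_le_ofReal (kfun_le ha hb hφmin hxu hy)
        _ = ENNReal.ofReal (kfunMax a b φmax) := by
            rw [lintegral_const, measure_univ, mul_one]
    have hβ0 : (∫⁻ y, κt y ∂μm) ≠ 0 := by
      intro h0
      rw [h0, le_zero_iff] at hβ1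
      exact (ENNReal.ofReal_pos.mpr hkm).ne' hβ1
    have hβtop : (∫⁻ y, κt y ∂μm) ≠ ⊤ := (lt_of_le_of_lt hβ2 ENNReal.ofReal_lt_top).ne
    have hαgβ : (∫⁻ y, κt y * g y ∂μm) ≤ ∫⁻ y, κt y ∂μm := by
      apply lintegral_mono
      intro y
      calc κt y * g y ≤ κt y * 1 := mul_le_mul_right (hg1 y) _
        _ = κt y := mul_one _
    have hpη1 : η Set.univ < 1 := by
      rw [hpeq]
      calc (∫⁻ y, κt y ∂μm) * ((n : ℝ≥0∞))⁻¹
          ≤ ENNReal.ofReal (kfunMax a b φmax) * ((n : ℝ≥0∞))⁻¹ :=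
            mul_le_mul_left hβ2 _
        _ < (n : ℝ≥0∞) * ((n : ℝ≥0∞))⁻¹ := by
            apply ENNReal.mul_lt_mul_left (ENNReal.inv_ne_zero.mpr hnETop)
              (ENNReal.inv_ne_top.mpr hnE0)
            rw [← ENNReal.ofReal_natCast n]
            exact (ENNReal.ofReal_lt_ofReal_iff hnR).mpr hkn
        _ = 1 := ENNReal.mul_inv_cancel hnE0 hnETop
    have hpη0 : η Set.univ ≠ 0 := by
      rw [hpeq]
      exact mul_ne_zero hβ0 (ENNReal.inv_ne_zero.mpr hnETop)
    have hpηtop : η Set.univ ≠ ⊤ := (hpη1.trans ENNReal.one_lt_top).ne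
    have hq0 : (1 - η Set.univ) ≠ 0 := by
      rw [ne_eq, tsub_eq_zero_iff_le]
      exact not_le.mpr hpη1
    have hqtop : (1 - η Set.univ) ≠ ⊤ :=
      (lt_of_le_of_lt tsub_le_self ENNReal.one_lt_top).ne
    have hDmeas : Measurable fun ω => (Finset.univ.filter fun j : Fin k => e j ω = true).card := by
      have hrw : (fun ω => (Finset.univ.filter fun j : Fin k => e j ω = true).card)
          = fun ω => ∑ j : Fin k, if e j ω = true then 1 else 0 := by
        funext ω
        rw [Finset.card_filter]
      rw [hrw]
      apply Finset.measurable_sum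
      intro j _
      exact Measurable.ite (hemeas j (measurableSet_singleton true)) measurable_const
        measurable_const
    have hsd : MeasurableSet {ω | (Finset.univ.filter fun j : Fin k => e j ω = true).card = d} :=
      hDmeas (measurableSet_singleton d)
    have hK1 := key_comb Y e hYmeas hemeas hindep η hmap g hgm d
    have hK2 := key_comb Y e hYmeas hemeas hindep η hmap (fun _ => (1:ℝ≥0∞)) measurable_const d
    have hone : (fun ω => ∏ j ∈ Finset.univ.filter (fun j : Fin k => e j ω = true),
        (fun _ : ℝ => (1:ℝ≥0∞)) (Y j ω)) = fun _ => (1:ℝ≥0∞) := by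
      funext ω
      exact Finset.prod_const_one
    rw [hone, lintegral_indicator hsd, setLIntegral_one, lintegral_one] at hK2
    -- hK2 : P sd = C * (η univ)^d * (1 - η univ)^(k-d)
    have hC0 : (k.choose d : ℝ≥0∞) ≠ 0 := Nat.cast_ne_zero.mpr (Nat.choose_pos hd).ne'
    have hCtop : (k.choose d : ℝ≥0∞) ≠ ⊤ := ENNReal.natCast_ne_top _
    have hRHSint : (∫⁻ y, g y ∂(kernelBiased a b μm xu))
        = (∫⁻ y, κt y ∂μm)⁻¹ * ∫⁻ y, κt y * g y ∂μm := by
      have h1 : kernelBiased a b μm xu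
          = ((μm.withDensity κt) Set.univ)⁻¹ • (μm.withDensity κt) := rfl
      rw [h1, lintegral_smul_measure, withDensity_apply _ MeasurableSet.univ,
        setLIntegral_univ, lintegral_withDensity_eq_lintegral_mul μm hκtm hgm]
      rfl
    have hfinal : ∫⁻ ω, ∏ j ∈ Finset.univ.filter (fun j : Fin k => e j ω = true), g (Y j ω)
          ∂(P[|{ω | (Finset.univ.filter fun j : Fin k => e j ω = true).card = d}])
        = (∫⁻ y, g y ∂(kernelBiased a b μm xu)) ^ d := by
      have hcond : (P[|{ω | (Finset.univ.filter fun j : Fin k => e j ω = true).card = d}])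
          = (P {ω | (Finset.univ.filter fun j : Fin k => e j ω = true).card = d})⁻¹
              • P.restrict {ω | (Finset.univ.filter fun j : Fin k => e j ω = true).card = d} :=
        rfl
      rw [hcond, lintegral_smul_measure, smul_eq_mul, ← lintegral_indicator hsd, hK1, hK2,
        ennreal_alg _ _ _ _ hC0 hCtop (pow_ne_zero _ hq0) (ENNReal.pow_ne_top hqtop)
          (pow_ne_zero _ hpη0) (ENNReal.pow_ne_top hpηtop),
        hRHSint, ENNReal.inv_pow, ← mul_pow]
      congr 1
      calc (∫⁻ y, g y ∂η) * (η Set.univ)⁻¹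
          = (∫⁻ y, κt y * g y ∂μm) * ((n : ℝ≥0∞))⁻¹
              * ((∫⁻ y, κt y ∂μm) * ((n : ℝ≥0∞))⁻¹)⁻¹ := by rw [hXeq, hpeq]
        _ = (∫⁻ y, κt y * g y ∂μm) * ((n : ℝ≥0∞))⁻¹
              * ((∫⁻ y, κt y ∂μm)⁻¹ * (n : ℝ≥0∞)) := by
            rw [ENNReal.mul_inv (Or.inl hβ0) (Or.inl hβtop), inv_inv]
        _ = ((∫⁻ y, κt y ∂μm)⁻¹ * ∫⁻ y, κt y * g y ∂μm)
              * (((n : ℝ≥0∞))⁻¹ * (n : ℝ≥0∞)) := by ring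
        _ = (∫⁻ y, κt y ∂μm)⁻¹ * ∫⁻ y, κt y * g y ∂μm := by
            rw [ENNReal.inv_mul_cancel hnE0 hnETop, mul_one]
    exact hfinal
  · exact tv_main ha hb hφmin hφ hsupp
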